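/- arXiv:2110.14238 — 2 statements merged into one kernel-verified Lean document; each statement's English description precedes it below -/
import Mathlib

section
/- If Val is a present-focused and suffix-monotonic value function, then any positional strategy that only uses transitions used by some cautious strategy in the letter game on a nondeterministic Val-automaton A is itself cautious. -/
/-- A nondeterministic quantitative automaton over alphabet `A`:
states, an initial state, and a total transition relation with rational weights. -/
structure NQA (A : Type) where
  Q : Type
  init : Q
  δ : Q → A → Set (ℚ × Q)
  total : ∀ q a, (δ q a).Nonempty

/-- `IsRunFrom M q u xs`: `xs` is the weight sequence of a run of `M` on the
finite word `u` starting in state `q`. -/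
inductive IsRunFrom {A : Type} (M : NQA A) : M.Q → List A → List ℚ → Prop
  | nil (q : M.Q) : IsRunFrom M q [] []
  | cons {q : M.Q} {a : A} {u : List A} {x : ℚ} {q' : M.Q} {xs : List ℚ} :
      (x, q') ∈ M.δ q a → IsRunFrom M q' u xs → IsRunFrom M q (a :: u) (x :: xs)

/-- The value of the automaton on a finite word: supremum of values of runs. -/
noncomputable def AVal {A : Type} (M : NQA A) (Val : List ℚ → ℝ) (u : List A) : ℝ :=
  sSup {r : ℝ | ∃ xs, IsRunFrom M M.init u xs ∧ Val xs = r}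

/-- The state reached by Eve's letter-game strategy `s` (which picks a
transition from the word read so far and the current letter) after reading `u`,
starting from state `q` with word-history `pre`. -/
def stratStateAux {A : Type} (M : NQA A) (s : List A → A → ℚ × M.Q)
    (pre : List A) (q : M.Q) : List A → M.Q
  | [] => q
  | a :: u => stratStateAux M s (pre ++ [a]) (s pre a).2 u

/-- The state reached by strategy `s` after the word `u`. -/
def stratState {A : Type} (M : NQA A) (s : List A → A → ℚ × M.Q) (u : List A) : M.Q :=
  stratStateAux M s [] M.init u

/-- The weights of the run built by strategy `s` on the word `u`. -/
def stratWeightsAux {A : Type} (M : NQA A) (s : List A → A → ℚ × M.Q)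
    (pre : List A) : List A → List ℚ
  | [] => []
  | a :: u => (s pre a).1 :: stratWeightsAux M s (pre ++ [a]) u

def stratWeights {A : Type} (M : NQA A) (s : List A → A → ℚ × M.Q) (u : List A) : List ℚ :=
  stratWeightsAux M s [] u

/-- The strategy only uses transitions of the automaton. -/
def StratLegal {A : Type} (M : NQA A) (s : List A → A → ℚ × M.Q) : Prop :=
  ∀ u a, s u a ∈ M.δ (stratState M s u) a

/-- A strategy of Eve in the letter game is cautious if it never makes a move
after which the best achievable value of some continuation strictly drops. -/
def Cautious {A : Type} (M : NQA A) (Val : List ℚ → ℝ) (s : List A → A → ℚ × M.Q) : Prop :=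
  StratLegal M s ∧
  ∀ u a v,
    sSup {r : ℝ | ∃ xs, IsRunFrom M (stratState M s u) (a :: v) xs ∧
        r = Val (stratWeights M s u ++ xs)} ≤
    sSup {r : ℝ | ∃ ys, IsRunFrom M (s u a).2 v ys ∧
        r = Val (stratWeights M s u ++ (s u a).1 :: ys)}

/-- `M` is history deterministic: Eve wins her letter game, i.e. she has a
strategy building, letter by letter, runs achieving the automaton's value. -/
def HistoryDet {A : Type} (M : NQA A) (Val : List ℚ → ℝ) : Prop :=
  ∃ s : List A → A → ℚ × M.Q, StratLegal M s ∧
    ∀ u : List A, AVal M Val u ≤ Val (stratWeights M s u)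

/-- Weights of the run of the pruned (deterministic) automaton given by the
choice function `σ` from state `q` on a word. -/
def detWeights {A : Type} (M : NQA A) (σ : M.Q → A → ℚ × M.Q) : M.Q → List A → List ℚ
  | _, [] => []
  | q, a :: u => (σ q a).1 :: detWeights M σ (σ q a).2 u

/-- `M` is determinizable by pruning: some choice of a single transition per
state-letter pair yields an equivalent deterministic automaton. -/
def DetByPruning {A : Type} (M : NQA A) (Val : List ℚ → ℝ) : Prop :=
  ∃ σ : M.Q → A → ℚ × M.Q, (∀ q a, σ q a ∈ M.δ q a) ∧
    ∀ u : List A, Val (detWeights M σ M.init u) = AVal M Val u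

/-- The state reached by a positional strategy `p` on the word `u`. -/
def posState {A : Type} (M : NQA A) (p : M.Q → A → ℚ × M.Q) (u : List A) : M.Q :=
  u.foldl (fun q a => (p q a).2) M.init

/-- A positional strategy viewed as a letter-game (history-based) strategy. -/
def posStrat {A : Type} (M : NQA A) (p : M.Q → A → ℚ × M.Q) :
    List A → A → ℚ × M.Q := fun u a => p (posState M p u) a


section AuxPruning
variable {A : Type}

lemma runs_finite (M : NQA A) (hfin : ∀ q a, (M.δ q a).Finite) :
    ∀ (u : List A) (q : M.Q), {xs | IsRunFrom M q u xs}.Finite := by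
  intro u
  induction u with
  | nil =>
    intro q
    refine Set.Finite.subset (Set.finite_singleton ([] : List ℚ)) ?_
    rintro xs hxs
    cases hxs
    simp
  | cons a u ih =>
    intro q
    refine Set.Finite.subset ((hfin q a).biUnion
      (fun t _ => (ih t.2).image (fun xs => t.1 :: xs))) ?_
    rintro xs hxs
    cases hxs with
    | cons h hr => exact Set.mem_biUnion h ⟨_, hr, rfl⟩

lemma runs_nonempty (M : NQA A) :
    ∀ (u : List A) (q : M.Q), {xs | IsRunFrom M q u xs}.Nonempty := by
  intro u
  induction u with
  | nil => exact fun q => ⟨[], IsRunFrom.nil q⟩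
  | cons a u ih =>
    intro q
    obtain ⟨⟨x, q'⟩, h⟩ := M.total q a
    obtain ⟨xs, hxs⟩ := ih q'
    exact ⟨x :: xs, IsRunFrom.cons h hxs⟩

lemma posState_aux (M : NQA A) (p : M.Q → A → ℚ × M.Q) :
    ∀ (u pre : List A),
      stratStateAux M (posStrat M p) pre (posState M p pre) u = posState M p (pre ++ u) := by
  intro u
  induction u with
  | nil => intro pre; simp [stratStateAux]
  | cons a u ih =>
    intro pre
    have h2 : (posStrat M p pre a).2 = posState M p (pre ++ [a]) := by
      simp [posStrat, posState, List.foldl_append]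
    show stratStateAux M (posStrat M p) (pre ++ [a]) (posStrat M p pre a).2 u
        = posState M p (pre ++ a :: u)
    rw [h2, ih (pre ++ [a])]
    simp

lemma posState_eq (M : NQA A) (p : M.Q → A → ℚ × M.Q) (u : List A) :
    stratState M (posStrat M p) u = posState M p u := by
  simpa [stratState, posState] using posState_aux M p u []

end AuxPruning

/-- If Val is present focused (every cautious strategy in the
letter game on any Val-automaton over `A` is winning) and suffix monotonic,
then any positional strategy that only uses transitions used by some cautious
strategy `s` in the letter game on `M` is itself cautious. -/
theorem positional_pruning_cautious {A : Type} (Val : List ℚ → ℝ)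
    (hPF : ∀ (M' : NQA A) (s' : List A → A → ℚ × M'.Q), Cautious M' Val s' →
      ∀ u : List A, Val (stratWeights M' s' u) = AVal M' Val u)
    (hSM : ∀ (S : Finset ℚ) (α β β' : List ℚ),
      (∀ x ∈ α, x ∈ S) → (∀ x ∈ β, x ∈ S) → (∀ x ∈ β', x ∈ S) →
      (Val β ≥ Val β' ↔ Val (α ++ β) ≥ Val (α ++ β')))
    (M : NQA A) (hfin : ∀ q a, (M.δ q a).Finite)
    (s : List A → A → ℚ × M.Q) (hc : Cautious M Val s)
    (p : M.Q → A → ℚ × M.Q)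
    (hp : ∀ q a, ∃ u : List A, stratState M s u = q ∧ s u a = p q a) :
    Cautious M Val (posStrat M p) := by
  have hposeq : ∀ u, stratState M (posStrat M p) u = posState M p u := posState_eq M p
  constructor
  · intro u a
    obtain ⟨u₀, hq, ha⟩ := hp (posState M p u) a
    have hleg := hc.1 u₀ a
    rw [hq, ha] at hleg
    simpa [posStrat, hposeq u] using hleg
  · intro u a v
    rw [hposeq u]
    obtain ⟨u₀, hq, ha⟩ := hp (posState M p u) a
    have hcaut := hc.2 u₀ a v
    rw [hq, ha] at hcaut
    set qq := posState M p u with hqq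
    set c := (p qq a).1 with hc1
    set q' := (p qq a).2 with hq2
    set w := stratWeights M (posStrat M p) u with hw
    set w₀ := stratWeights M s u₀ with hw₀
    have hstrat : posStrat M p u a = p qq a := rfl
    rw [hstrat]
    -- finite run sets
    set X := {xs | IsRunFrom M qq (a :: v) xs} with hX
    set Y := {ys | IsRunFrom M q' v ys} with hY
    have hXf : X.Finite := runs_finite M hfin (a :: v) qq
    have hYf : Y.Finite := runs_finite M hfin v q'
    have hXne : X.Nonempty := runs_nonempty M (a :: v) qq
    have hYne : Y.Nonempty := runs_nonempty M v q'
    -- the finite set of weights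
    set Sset : Set ℚ := {x | x ∈ w} ∪ {x | x ∈ w₀} ∪ {c} ∪
        (⋃ xs ∈ X, {x | x ∈ xs}) ∪ (⋃ ys ∈ Y, {x | x ∈ ys}) with hSset
    have hSf : Sset.Finite := by
      refine (((((w.finite_toSet).union (w₀.finite_toSet)).union
        (Set.finite_singleton c)).union (hXf.biUnion fun xs _ => xs.finite_toSet)).union
        (hYf.biUnion fun ys _ => ys.finite_toSet))
    set S : Finset ℚ := hSf.toFinset with hSdef
    have hmemS : ∀ x, x ∈ S ↔ x ∈ Sset := fun x => hSf.mem_toFinset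
    have hw_mem : ∀ x ∈ w, x ∈ S := fun x hx => (hmemS x).2 (by
      simp only [hSset, Set.mem_union]; tauto)
    have hw₀_mem : ∀ x ∈ w₀, x ∈ S := fun x hx => (hmemS x).2 (by
      simp only [hSset, Set.mem_union]; tauto)
    have hxs_mem : ∀ xs ∈ X, ∀ x ∈ xs, x ∈ S := fun xs hxs x hx => (hmemS x).2 (by
      simp only [hSset, Set.mem_union]
      exact Or.inl (Or.inr (Set.mem_biUnion hxs hx)))
    have hys_mem : ∀ ys ∈ Y, ∀ x ∈ c :: ys, x ∈ S := by
      rintro ys hys x hx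
      rcases List.mem_cons.1 hx with h | h
      · exact (hmemS x).2 (by
          simp only [hSset, Set.mem_union]
          exact Or.inl (Or.inl (Or.inr (by simpa using h))))
      · exact (hmemS x).2 (by
          simp only [hSset, Set.mem_union]
          exact Or.inr (Set.mem_biUnion hys h))
    -- maximizer over Y w.r.t. prefix w₀
    obtain ⟨ys₀, hys₀Y, hys₀max⟩ :=
      Set.exists_max_image Y (fun ys => Val (w₀ ++ c :: ys)) hYf hYne
    -- bounded above facts
    have hbddL₀ : BddAbove {r : ℝ | ∃ xs, IsRunFrom M qq (a :: v) xs ∧ r = Val (w₀ ++ xs)} := by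
      refine Set.Finite.bddAbove (Set.Finite.subset (hXf.image fun xs => Val (w₀ ++ xs)) ?_)
      rintro r ⟨xs, hxs, rfl⟩
      exact ⟨xs, hxs, rfl⟩
    have hbddRw : BddAbove {r : ℝ | ∃ ys, IsRunFrom M q' v ys ∧ r = Val (w ++ c :: ys)} := by
      refine Set.Finite.bddAbove (Set.Finite.subset (hYf.image fun ys => Val (w ++ c :: ys)) ?_)
      rintro r ⟨ys, hys, rfl⟩
      exact ⟨ys, hys, rfl⟩
    -- the big chain, for each run xs ∈ X
    have hkey : ∀ xs ∈ X, Val (w ++ xs) ≤ Val (w ++ c :: ys₀) := by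
      intro xs hxs
      have h1 : Val (w₀ ++ xs) ≤
          sSup {r : ℝ | ∃ xs, IsRunFrom M qq (a :: v) xs ∧ r = Val (w₀ ++ xs)} :=
        le_csSup hbddL₀ ⟨xs, hxs, rfl⟩
      have h2 : sSup {r : ℝ | ∃ ys, IsRunFrom M q' v ys ∧ r = Val (w₀ ++ c :: ys)} ≤
          Val (w₀ ++ c :: ys₀) := by
        refine csSup_le ⟨Val (w₀ ++ c :: ys₀), ys₀, hys₀Y, rfl⟩ ?_
        rintro r ⟨ys, hys, rfl⟩
        exact hys₀max ys hys
      have h3 : Val (w₀ ++ xs) ≤ Val (w₀ ++ c :: ys₀) := h1.trans (hcaut.trans h2)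
      have h4 : Val (c :: ys₀) ≥ Val xs :=
        (hSM S w₀ (c :: ys₀) xs hw₀_mem (hys_mem ys₀ hys₀Y) (hxs_mem xs hxs)).2 h3
      exact (hSM S w (c :: ys₀) xs hw_mem (hys_mem ys₀ hys₀Y) (hxs_mem xs hxs)).1 h4
    refine csSup_le ?_ ?_
    · obtain ⟨xs, hxs⟩ := hXne
      exact ⟨Val (w ++ xs), xs, hxs, rfl⟩
    · rintro r ⟨xs, hxs, rfl⟩
      exact (hkey xs hxs).trans (le_csSup hbddRw ⟨ys₀, hys₀Y, rfl⟩)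
end

section
/- For a λ-discounted-sum automaton with maximal absolute transition weight m, if Eve plays a cautious strategy in the letter game, then for every infinite word w, every position i, and every run r′ on w, the cautious run r satisfies Val(r′[0..i]) − Val(r[0..i]) ≤ 2m·λ^i/(1−λ); consequently DSum(r) equals the automaton's value on w, so DSum on infinite words is present focused. -/
/-- `InfRunFrom M q w qs xs`: `qs`/`xs` are the states/weights of an infinite
run of `M` on the infinite word `w` starting in state `q`. -/
def InfRunFrom {A : Type} (M : NQA A) (q : M.Q) (w : ℕ → A)
    (qs : ℕ → M.Q) (xs : ℕ → ℚ) : Prop :=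
  qs 0 = q ∧ ∀ i, (xs i, qs (i + 1)) ∈ M.δ (qs i) (w i)

/-- Discounted sum of an infinite weight sequence. -/
noncomputable def DSumInf (lam : ℝ) (xs : ℕ → ℚ) : ℝ := ∑' i : ℕ, lam ^ i * (xs i : ℝ)

/-- The value of a λ-discounted-sum automaton from state `q` on an infinite word. -/
noncomputable def DSumVal {A : Type} (M : NQA A) (lam : ℝ) (q : M.Q) (w : ℕ → A) : ℝ :=
  sSup {r : ℝ | ∃ qs xs, InfRunFrom M q w qs xs ∧ r = DSumInf lam xs}

/-- Prepending a finite word to an infinite word. -/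
def wordCat {A : Type} (u : List A) (v : ℕ → A) : ℕ → A := fun i =>
  if h : i < u.length then u.get ⟨i, h⟩ else v (i - u.length)

/-- Prepending a finite weight sequence to an infinite one. -/
def qcat (α : List ℚ) (xs : ℕ → ℚ) : ℕ → ℚ := fun i =>
  if h : i < α.length then α.get ⟨i, h⟩ else xs (i - α.length)

/-- The prefix of length `n` of an infinite word. -/
def pref {A : Type} (w : ℕ → A) (n : ℕ) : List A := List.ofFn (fun i : Fin n => w i)

/-- The weight sequence of the run built by strategy `s` on the infinite word `w`. -/
def stratWInf {A : Type} (M : NQA A) (s : List A → A → ℚ × M.Q) (w : ℕ → A) : ℕ → ℚ :=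
  fun n => (s (pref w n) (w n)).1

/-- Eve's strategy `s` is cautious (for discounted sum on infinite words): after
any finite word `u`, for every infinite continuation `v` there is a run from the
current state whose discounted sum, together with the weights produced so far,
equals the automaton's value on `uv`. -/
def CautiousDSum {A : Type} (M : NQA A) (lam : ℝ) (s : List A → A → ℚ × M.Q) : Prop :=
  StratLegal M s ∧
  ∀ (u : List A) (v : ℕ → A), ∃ qs xs,
    InfRunFrom M (stratState M s u) v qs xs ∧
    DSumInf lam (qcat (stratWeights M s u) xs) = DSumVal M lam M.init (wordCat u v)


section Aux

variable {A : Type}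

open Filter

lemma summable_disc {lam : ℝ} (hlam0 : 0 < lam) (hlam1 : lam < 1) (xs : ℕ → ℚ) (m : ℝ)
    (hb : ∀ i, |(xs i : ℝ)| ≤ m) : Summable (fun i => lam ^ i * (xs i : ℝ)) := by
  apply Summable.of_norm_bounded
    ((summable_geometric_of_lt_one hlam0.le hlam1).mul_left m)
  intro i
  rw [norm_mul, norm_pow, Real.norm_eq_abs, Real.norm_eq_abs, abs_of_pos hlam0, mul_comm]
  exact mul_le_mul_of_nonneg_right (hb i) (pow_nonneg hlam0.le i)

lemma tsum_disc_bound {lam : ℝ} (hlam0 : 0 < lam) (hlam1 : lam < 1) (xs : ℕ → ℚ) (m : ℝ)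
    (hb : ∀ i, |(xs i : ℝ)| ≤ m) :
    |∑' i : ℕ, lam ^ i * (xs i : ℝ)| ≤ m / (1 - lam) := by
  have hs : Summable (fun i => ‖lam ^ i * (xs i : ℝ)‖) := by
    apply Summable.of_nonneg_of_le (fun i => norm_nonneg _) (fun i => ?_)
      ((summable_geometric_of_lt_one hlam0.le hlam1).mul_left m)
    rw [norm_mul, norm_pow, Real.norm_eq_abs, Real.norm_eq_abs, abs_of_pos hlam0, mul_comm]
    exact mul_le_mul_of_nonneg_right (hb i) (pow_nonneg hlam0.le i)
  calc |∑' i : ℕ, lam ^ i * (xs i : ℝ)| ≤ ∑' i : ℕ, ‖lam ^ i * (xs i : ℝ)‖ :=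
        norm_tsum_le_tsum_norm hs
    _ ≤ ∑' i : ℕ, m * lam ^ i := by
        apply Summable.tsum_le_tsum _ hs ((summable_geometric_of_lt_one hlam0.le hlam1).mul_left m)
        intro i
        rw [norm_mul, norm_pow, Real.norm_eq_abs, Real.norm_eq_abs, abs_of_pos hlam0, mul_comm]
        exact mul_le_mul_of_nonneg_right (hb i) (pow_nonneg hlam0.le i)
    _ = m / (1 - lam) := by
        rw [tsum_mul_left, tsum_geometric_of_lt_one hlam0.le hlam1, div_eq_mul_inv]

lemma DSumInf_split {lam : ℝ} (hlam0 : 0 < lam) (hlam1 : lam < 1) (xs : ℕ → ℚ) (m : ℝ)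
    (hb : ∀ i, |(xs i : ℝ)| ≤ m) (n : ℕ) :
    DSumInf lam xs = (∑ j ∈ Finset.range n, lam ^ j * (xs j : ℝ))
      + lam ^ n * ∑' i : ℕ, lam ^ i * (xs (i + n) : ℝ) := by
  have hs := summable_disc hlam0 hlam1 xs m hb
  have := Summable.sum_add_tsum_nat_add (f := fun i => lam ^ i * (xs i : ℝ)) n hs
  rw [DSumInf, ← this]
  congr 1
  rw [← tsum_mul_left]
  exact tsum_congr fun i => by beta_reduce; rw [pow_add]; ring

lemma partial_bound {lam : ℝ} (hlam0 : 0 < lam) (hlam1 : lam < 1) (xs : ℕ → ℚ) (m : ℝ)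
    (hb : ∀ i, |(xs i : ℝ)| ≤ m) (n : ℕ) :
    |DSumInf lam xs - ∑ j ∈ Finset.range n, lam ^ j * (xs j : ℝ)| ≤ lam ^ n * (m / (1 - lam)) := by
  rw [DSumInf_split hlam0 hlam1 xs m hb n, add_sub_cancel_left, abs_mul,
    abs_of_pos (pow_pos hlam0 n)]
  exact mul_le_mul_of_nonneg_left
    (tsum_disc_bound hlam0 hlam1 (fun i => xs (i + n)) m (fun i => hb _))
    (pow_pos hlam0 n).le

lemma stratStateAux_snoc (M : NQA A) (s : List A → A → ℚ × M.Q) (a : A) :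
    ∀ (u pre : List A) (q : M.Q),
      stratStateAux M s pre q (u ++ [a]) = (s (pre ++ u) a).2
  | [], pre, q => by simp [stratStateAux]
  | b :: u, pre, q => by
    show stratStateAux M s (pre ++ [b]) (s pre b).2 (u ++ [a]) = _
    rw [stratStateAux_snoc M s a u (pre ++ [b]) _, List.append_assoc]
    rfl

lemma stratWeightsAux_snoc (M : NQA A) (s : List A → A → ℚ × M.Q) (a : A) :
    ∀ (u pre : List A),
      stratWeightsAux M s pre (u ++ [a]) = stratWeightsAux M s pre u ++ [(s (pre ++ u) a).1]
  | [], pre => by simp [stratWeightsAux]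
  | b :: u, pre => by
    show (s pre b).1 :: stratWeightsAux M s (pre ++ [b]) (u ++ [a]) = _
    rw [stratWeightsAux_snoc M s a u (pre ++ [b]), List.append_assoc]
    rfl

lemma pref_succ {w : ℕ → A} (n : ℕ) : pref w (n + 1) = pref w n ++ [w n] := by
  rw [pref, List.ofFn_succ']
  simp [pref, List.concat_eq_append]

lemma stratState_snoc (M : NQA A) (s : List A → A → ℚ × M.Q) (u : List A) (a : A) :
    stratState M s (u ++ [a]) = (s u a).2 := by
  rw [stratState, stratStateAux_snoc]; rfl

lemma stratWeights_pref (M : NQA A) (s : List A → A → ℚ × M.Q) (w : ℕ → A) :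
    ∀ n, stratWeights M s (pref w n) = List.ofFn (fun j : Fin n => stratWInf M s w j)
  | 0 => rfl
  | n + 1 => by
    rw [pref_succ, stratWeights, stratWeightsAux_snoc, List.nil_append,
      ← stratWeights, stratWeights_pref M s w n, List.ofFn_succ']
    simp [stratWInf, List.concat_eq_append]

lemma wordCat_pref (w : ℕ → A) (n : ℕ) :
    wordCat (pref w n) (fun k => w (k + n)) = w := by
  funext i
  rw [wordCat]
  split
  · next h =>
    simp [pref] at h ⊢
  · next h =>
    have hlen : (pref w n).length = n := by simp [pref]
    rw [hlen] at h ⊢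
    congr 1
    omega

lemma qcat_pref_eq (M : NQA A) (s : List A → A → ℚ × M.Q) (w : ℕ → A) (n : ℕ)
    (ys : ℕ → ℚ) (j : ℕ) (hj : j < n) :
    qcat (stratWeights M s (pref w n)) ys j = stratWInf M s w j := by
  rw [stratWeights_pref, qcat]
  have hlen : (List.ofFn fun j : Fin n => stratWInf M s w j).length = n := by simp
  split
  · next h => simp
  · next h => rw [hlen] at h; omega

lemma strat_run (M : NQA A) (s : List A → A → ℚ × M.Q) (hleg : StratLegal M s) (w : ℕ → A) :
    InfRunFrom M M.init w (fun i => stratState M s (pref w i)) (stratWInf M s w) := by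
  constructor
  · rfl
  · intro i
    have : stratState M s (pref w (i + 1)) = (s (pref w i) (w i)).2 := by
      rw [pref_succ, stratState_snoc]
    show (stratWInf M s w i, stratState M s (pref w (i+1))) ∈
      M.δ (stratState M s (pref w i)) (w i)
    rw [this]
    exact hleg (pref w i) (w i)

lemma run_bdd (M : NQA A) {m : ℝ}
    (hm : ∀ q a x q', (x, q') ∈ M.δ q a → |(x : ℝ)| ≤ m)
    {q : M.Q} {w : ℕ → A} {qs : ℕ → M.Q} {xs : ℕ → ℚ}
    (h : InfRunFrom M q w qs xs) : ∀ i, |(xs i : ℝ)| ≤ m :=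
  fun i => hm _ _ _ _ (h.2 i)

lemma dsumval_bddAbove (M : NQA A) {lam m : ℝ} (hlam0 : 0 < lam) (hlam1 : lam < 1)
    (hm : ∀ q a x q', (x, q') ∈ M.δ q a → |(x : ℝ)| ≤ m) (q : M.Q) (w : ℕ → A) :
    BddAbove {r : ℝ | ∃ qs xs, InfRunFrom M q w qs xs ∧ r = DSumInf lam xs} := by
  refine ⟨m / (1 - lam), ?_⟩
  rintro r ⟨qs, xs, hrun, rfl⟩
  exact le_of_abs_le (tsum_disc_bound hlam0 hlam1 xs m (run_bdd M hm hrun))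

end Aux

/-- For a λ-discounted-sum automaton with transition weights
bounded in absolute value by `m`, if Eve plays a cautious strategy in the letter
game, then for every infinite word `w`, every position `i`, and every run on
`w`, the cautious run's partial discounted sum is within 2m·λ^i/(1−λ) of that of
the other run; consequently the cautious run achieves the automaton's value on
`w`, so DSum on infinite words is present focused. -/

theorem dsum_present_focused {A : Type} (M : NQA A) (lam m : ℝ)
    (hlam0 : 0 < lam) (hlam1 : lam < 1)
    (hm : ∀ q a x q', (x, q') ∈ M.δ q a → |(x : ℝ)| ≤ m)
    (s : List A → A → ℚ × M.Q) (hc : CautiousDSum M lam s) :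
    ∀ w : ℕ → A,
      (∀ qs xs, InfRunFrom M M.init w qs xs → ∀ i : ℕ,
        (∑ j ∈ Finset.range (i + 1), lam ^ j * (xs j : ℝ)) -
          (∑ j ∈ Finset.range (i + 1), lam ^ j * (stratWInf M s w j : ℝ)) ≤
        2 * m * lam ^ i / (1 - lam)) ∧
      DSumInf lam (stratWInf M s w) = DSumVal M lam M.init w := by
  intro w
  have hleg := hc.1
  have hm0 : 0 ≤ m := by
    obtain ⟨⟨x, q'⟩, hx⟩ := M.total M.init (w 0)
    exact le_trans (abs_nonneg _) (hm _ _ _ _ hx)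
  have h1lam : (0:ℝ) < 1 - lam := by linarith
  -- Part 1
  have part1 : ∀ qs xs, InfRunFrom M M.init w qs xs → ∀ i : ℕ,
      (∑ j ∈ Finset.range (i + 1), lam ^ j * (xs j : ℝ)) -
        (∑ j ∈ Finset.range (i + 1), lam ^ j * (stratWInf M s w j : ℝ)) ≤
      2 * m * lam ^ i / (1 - lam) := by
    intro qs xs hrun i
    set n := i + 1 with hn
    have hxb : ∀ j, |(xs j : ℝ)| ≤ m := run_bdd M hm hrun
    obtain ⟨qs', ys, hrun', hval⟩ := hc.2 (pref w n) (fun k => w (k + n))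
    rw [wordCat_pref] at hval
    have hyb : ∀ j, |(ys j : ℝ)| ≤ m := run_bdd M hm hrun'
    have hcb : ∀ j, |((qcat (stratWeights M s (pref w n)) ys j : ℚ) : ℝ)| ≤ m := by
      intro j
      by_cases hj : j < n
      · rw [qcat_pref_eq M s w n ys j hj]
        have : stratState M s (pref w (j+1)) = (s (pref w j) (w j)).2 := by
          rw [pref_succ, stratState_snoc]
        exact hm _ _ _ _ (hleg (pref w j) (w j))
      · rw [qcat]
        have hlen : (stratWeights M s (pref w n)).length = n := by
          rw [stratWeights_pref]; simp [hn]
        rw [dif_neg (by rw [hlen]; exact hj)]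
        exact hyb _
    -- DSumInf xs ≤ DSumVal
    have hle : DSumInf lam xs ≤ DSumVal M lam M.init w :=
      le_csSup (dsumval_bddAbove M hlam0 hlam1 hm M.init w) ⟨qs, xs, hrun, rfl⟩
    -- partial of xs
    have hxp : (∑ j ∈ Finset.range n, lam ^ j * (xs j : ℝ)) ≤
        DSumInf lam xs + lam ^ n * (m / (1 - lam)) := by
      have := partial_bound hlam0 hlam1 xs m hxb n
      have := abs_le.mp this
      linarith [this.1]
    -- DSumVal = partial strat + tail
    have hcat : DSumVal M lam M.init w ≤
        (∑ j ∈ Finset.range n, lam ^ j * (stratWInf M s w j : ℝ)) + lam ^ n * (m / (1 - lam)) := by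
      rw [← hval]
      have hsplit := DSumInf_split hlam0 hlam1 (qcat (stratWeights M s (pref w n)) ys) m hcb n
      rw [hsplit]
      have heq : (∑ j ∈ Finset.range n, lam ^ j *
          ((qcat (stratWeights M s (pref w n)) ys j : ℚ) : ℝ)) =
          ∑ j ∈ Finset.range n, lam ^ j * (stratWInf M s w j : ℝ) := by
        apply Finset.sum_congr rfl
        intro j hj
        rw [qcat_pref_eq M s w n ys j (Finset.mem_range.mp hj)]
      rw [heq]
      have htail : |∑' k : ℕ, lam ^ k *
          ((qcat (stratWeights M s (pref w n)) ys (k + n) : ℚ) : ℝ)| ≤ m / (1 - lam) :=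
        tsum_disc_bound hlam0 hlam1 _ m (fun k => hcb (k + n))
      have := (abs_le.mp htail).2
      have hpn : (0:ℝ) < lam ^ n := pow_pos hlam0 n
      nlinarith
    have hfin : (∑ j ∈ Finset.range n, lam ^ j * (xs j : ℝ)) -
        (∑ j ∈ Finset.range n, lam ^ j * (stratWInf M s w j : ℝ)) ≤
        2 * (lam ^ n * (m / (1 - lam))) := by linarith
    calc (∑ j ∈ Finset.range n, lam ^ j * (xs j : ℝ)) -
        (∑ j ∈ Finset.range n, lam ^ j * (stratWInf M s w j : ℝ))
        ≤ 2 * (lam ^ n * (m / (1 - lam))) := hfin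
      _ ≤ 2 * m * lam ^ i / (1 - lam) := by
          rw [hn, pow_succ]
          have hd : (0:ℝ) ≤ m / (1 - lam) := div_nonneg hm0 h1lam.le
          have hpi : (0:ℝ) ≤ lam ^ i := (pow_pos hlam0 i).le
          have hrw : 2 * m * lam ^ i / (1 - lam) = 2 * lam ^ i * (m / (1 - lam)) := by
            ring
          rw [hrw]
          nlinarith [mul_nonneg (mul_nonneg (by linarith : (0:ℝ) ≤ 1 - lam) hpi) hd]
    -- done part1
  refine ⟨part1, ?_⟩
  -- Part 2
  have hsleg : ∀ j, |((stratWInf M s w j : ℚ) : ℝ)| ≤ m := by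
    intro j
    exact hm _ _ _ _ (hleg (pref w j) (w j))
  have hsrun := strat_run M s hleg w
  have hle1 : DSumInf lam (stratWInf M s w) ≤ DSumVal M lam M.init w :=
    le_csSup (dsumval_bddAbove M hlam0 hlam1 hm M.init w) ⟨_, _, hsrun, rfl⟩
  obtain ⟨qs0, ys0, hrun0, hval0⟩ := hc.2 [] w
  have hwcat : wordCat [] w = w := by funext i; simp [wordCat]
  have hqcat : qcat (stratWeights M s []) ys0 = ys0 := by
    funext i; rfl
  rw [hwcat, hqcat] at hval0
  have hrun0' : InfRunFrom M M.init w qs0 ys0 := hrun0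
  have hyb : ∀ j, |(ys0 j : ℝ)| ≤ m := run_bdd M hm hrun0'
  -- limit argument
  have hsum_y : Summable (fun j => lam ^ j * (ys0 j : ℝ)) :=
    summable_disc hlam0 hlam1 ys0 m hyb
  have hsum_s : Summable (fun j => lam ^ j * ((stratWInf M s w j : ℚ) : ℝ)) :=
    summable_disc hlam0 hlam1 _ m hsleg
  have hty : Filter.Tendsto (fun i : ℕ => ∑ j ∈ Finset.range (i + 1), lam ^ j * (ys0 j : ℝ))
      Filter.atTop (nhds (DSumInf lam ys0)) :=
    (hsum_y.hasSum.tendsto_sum_nat).comp (Filter.tendsto_add_atTop_nat 1)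
  have hts : Filter.Tendsto
      (fun i : ℕ => ∑ j ∈ Finset.range (i + 1), lam ^ j * ((stratWInf M s w j : ℚ) : ℝ))
      Filter.atTop (nhds (DSumInf lam (stratWInf M s w))) :=
    (hsum_s.hasSum.tendsto_sum_nat).comp (Filter.tendsto_add_atTop_nat 1)
  have hrhs : Filter.Tendsto (fun i : ℕ => 2 * m * lam ^ i / (1 - lam))
      Filter.atTop (nhds 0) := by
    have : (fun i : ℕ => 2 * m * lam ^ i / (1 - lam)) =
        (fun i : ℕ => (2 * m / (1 - lam)) * lam ^ i) := by
      funext i; ring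
    rw [this]
    simpa using (tendsto_pow_atTop_nhds_zero_of_lt_one hlam0.le hlam1).const_mul
      (2 * m / (1 - lam))
  have hle2 : DSumInf lam ys0 - DSumInf lam (stratWInf M s w) ≤ 0 :=
    le_of_tendsto_of_tendsto' (hty.sub hts) hrhs
      (fun i => part1 qs0 ys0 hrun0' i)
  have : DSumVal M lam M.init w ≤ DSumInf lam (stratWInf M s w) := by
    rw [← hval0]; linarith
  linarith
end
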